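/- In the uniformly expanding setting with constants $\lambda, K, \eta$ and $R$ chosen so that $R(1-\xi e^R) \ge K + \lambda^{-\eta}R$ for some $\xi \in (0,e^{-R})$: the limit $\rho = \lim_{n\to\infty} P_m^n 1$ exists in the H\"older norm $\|\cdot\|_\eta$, satisfies $\int_Y \rho\,dm = 1$, $P_m\rho = \rho$, $e^{-R} \le \rho \le e^R$, and $|\log\rho(x) - \log\rho(y)| \le R\, d(x,y)^\eta$ for all $x,y \in Y$. In particular $d\mu = \rho\,dm$ defines an $F$-invariant probability measure equivalent to $m$. -/

import Mathlib

open MeasureTheory Filter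

/-- The cone of normalized log-Hölder densities used in the proof. -/
def ConeAux {Y : Type*} [MetricSpace Y] [MeasurableSpace Y] (m : Measure Y)
    (R η : ℝ) (φ : Y → ℝ) : Prop :=
  (∀ x, 0 < φ x) ∧ (∀ x y : Y, |Real.log (φ x) - Real.log (φ y)| ≤ R * dist x y ^ η) ∧
  Integrable φ m ∧ ∫ y, φ y ∂m = 1

set_option maxHeartbeats 2000000 in
/-- Proposition 2.4: the invariant density `ρ = lim_n P_m^n 1` exists (in the
Hölder norm), satisfies `∫ ρ dm = 1`, `P_m ρ = ρ`, `e^{-R} ≤ ρ ≤ e^R` and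
`|log ρ|_η ≤ R`; in particular `dμ = ρ dm` is an `F`-invariant probability
measure equivalent to `m`. -/
theorem invariant_density_exists {Y : Type*} [MetricSpace Y] [MeasurableSpace Y]
    (m : Measure Y) [IsProbabilityMeasure m]
    (hdiam : ∀ x y : Y, dist x y ≤ 1)
    {ι : Type*} [Countable ι] (A : ι → Set Y)
    (F : Y → Y) (inv : ι → Y → Y)
    (hinv_mem : ∀ i y, inv i y ∈ A i)
    (hinv_right : ∀ i y, F (inv i y) = y)
    (hinv_left : ∀ i, ∀ x ∈ A i, inv i (F x) = x)
    (ζ : Y → ℝ) (hζ : ∀ x, 0 < ζ x)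
    (Λ K η R ξ : ℝ) (hΛ : 1 < Λ) (hK : 0 < K) (hη : η ∈ Set.Ioc (0:ℝ) 1)
    (hR : 0 < R) (hξ : ξ ∈ Set.Ioo 0 (Real.exp (-R)))
    (hRξ : K + Λ ^ (-η) * R ≤ R * (1 - ξ * Real.exp R))
    (hexp : ∀ i, ∀ x ∈ A i, ∀ y ∈ A i, Λ * dist x y ≤ dist (F x) (F y))
    (hdist : ∀ i, ∀ x ∈ A i, ∀ y ∈ A i,
      |Real.log (ζ x) - Real.log (ζ y)| ≤ K * dist (F x) (F y) ^ η)
    (Pm : (Y → ℝ) → Y → ℝ)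
    (hPm : ∀ (φ : Y → ℝ) (y : Y), Pm φ y = ∑' i, ζ (inv i y) * φ (inv i y))
    (hdual : ∀ φ : Y → ℝ, Integrable φ m → ∫ y, Pm φ y ∂m = ∫ y, φ y ∂m) :
    ∃ ρ : Y → ℝ,
      (∀ x, 0 < ρ x) ∧ Integrable ρ m ∧ (∫ y, ρ y ∂m = 1) ∧
      (∀ y, Pm ρ y = ρ y) ∧
      (∀ x, Real.exp (-R) ≤ ρ x ∧ ρ x ≤ Real.exp R) ∧
      (∀ x y : Y, |Real.log (ρ x) - Real.log (ρ y)| ≤ R * dist x y ^ η) ∧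
      (∀ ε > (0:ℝ), ∃ N : ℕ, ∀ n ≥ N, ∀ x z w : Y, z ≠ w →
        |(Pm^[n] (fun _ => 1)) x - ρ x| +
          |((Pm^[n] (fun _ => 1)) z - ρ z) - ((Pm^[n] (fun _ => 1)) w - ρ w)|
            / dist z w ^ η ≤ ε) := by
  obtain ⟨hη0, hη1⟩ := hη
  obtain ⟨hξ0, hξR⟩ := hξ
  have hΛ0 : (0:ℝ) < Λ := lt_trans one_pos hΛ
  have heR : (0:ℝ) < Real.exp R := Real.exp_pos R
  have heRn : (0:ℝ) < Real.exp (-R) := Real.exp_pos _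
  have hee : Real.exp (-R) * Real.exp R = 1 := by rw [← Real.exp_add]; simp
  have hξeR : ξ * Real.exp R < 1 := by nlinarith
  have hq0 : 0 < 1 - ξ * Real.exp R := by linarith
  have heRn1 : Real.exp (-R) < 1 := by
    rw [← Real.exp_zero]; exact Real.exp_lt_exp.mpr (by linarith)
  have hξ1 : ξ < 1 := lt_trans hξR heRn1
  have h1ξ : 0 < 1 - ξ := by linarith
  have hΛη : 0 < Λ ^ (-η) := Real.rpow_pos_of_pos hΛ0 _
  have hc0 : 0 < K + Λ ^ (-η) * R := by positivity
  have hdη0 : ∀ z w : Y, 0 ≤ dist z w ^ η := fun z w => Real.rpow_nonneg dist_nonneg _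
  have hdη1 : ∀ z w : Y, dist z w ^ η ≤ 1 :=
    fun z w => Real.rpow_le_one dist_nonneg (hdiam z w) hη0.le
  -- integral of `Pm 1`
  have hone_int : Integrable (fun _ : Y => (1:ℝ)) m := integrable_const 1
  have hint_one : ∫ y, Pm (fun _ => 1) y ∂m = 1 := by
    rw [hdual _ hone_int]; simp
  -- ι is nonempty
  have hι : Nonempty ι := by
    by_contra h
    rw [not_nonempty_iff] at h
    have h0 : ∀ y, Pm (fun _ => (1:ℝ)) y = 0 := by
      intro y; rw [hPm]; exact tsum_empty
    simp only [h0] at hint_one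
    simp at hint_one
  -- comparison of ζ ∘ inv at different points
  have hζcomp : ∀ y z i, ζ (inv i y) ≤ Real.exp K * ζ (inv i z) := by
    intro y z i
    have h := hdist i (inv i y) (hinv_mem i y) (inv i z) (hinv_mem i z)
    rw [hinv_right, hinv_right] at h
    have h2 : K * dist y z ^ η ≤ K := by nlinarith [hdη1 y z, hdη0 y z]
    have h1 : Real.log (ζ (inv i y)) - Real.log (ζ (inv i z)) ≤ K := by
      have := (abs_le.mp h).2; linarith
    calc ζ (inv i y) = Real.exp (Real.log (ζ (inv i y))) := (Real.exp_log (hζ _)).symm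
      _ ≤ Real.exp (K + Real.log (ζ (inv i z))) := Real.exp_le_exp.mpr (by linarith)
      _ = Real.exp K * ζ (inv i z) := by rw [Real.exp_add, Real.exp_log (hζ _)]
  -- summability of the weights
  have hsumζ : ∀ y, Summable fun i => ζ (inv i y) := by
    by_cases hex : ∃ y, Summable fun i => ζ (inv i y)
    · obtain ⟨y₀, hy₀⟩ := hex
      intro y
      exact Summable.of_nonneg_of_le (fun i => (hζ _).le) (fun i => hζcomp y y₀ i)
        (hy₀.mul_left (Real.exp K))
    · push_neg at hex
      exfalso
      have h0 : ∀ y, Pm (fun _ => (1:ℝ)) y = 0 := by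
        intro y; rw [hPm]; simp only [mul_one]
        exact tsum_eq_zero_of_not_summable (hex y)
      simp only [h0] at hint_one
      simp at hint_one
  have hsumφ : ∀ (φ : Y → ℝ) (B : ℝ), (∀ x, |φ x| ≤ B) → ∀ y,
      Summable fun i => ζ (inv i y) * φ (inv i y) := by
    intro φ B hB y
    apply Summable.of_norm
    apply Summable.of_nonneg_of_le (fun i => norm_nonneg _) _ ((hsumζ y).mul_right B)
    intro i
    rw [Real.norm_eq_abs, abs_mul, abs_of_pos (hζ _)]
    exact mul_le_mul_of_nonneg_left (hB _) (hζ _).le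
  -- basic cone facts
  have coneRatio : ∀ φ, ConeAux m R η φ → ∀ x y, φ x ≤ Real.exp R * φ y := by
    intro φ hφ x y
    obtain ⟨hpos, hhol, hint, hI⟩ := id hφ
    have h2 : R * dist x y ^ η ≤ R := by nlinarith [hdη1 x y, hdη0 x y]
    have h1 : Real.log (φ x) - Real.log (φ y) ≤ R := by
      have := (abs_le.mp (hhol x y)).2; linarith
    calc φ x = Real.exp (Real.log (φ x)) := (Real.exp_log (hpos x)).symm
      _ ≤ Real.exp (R + Real.log (φ y)) := Real.exp_le_exp.mpr (by linarith)
      _ = Real.exp R * φ y := by rw [Real.exp_add, Real.exp_log (hpos y)]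
  have coneUB : ∀ φ, ConeAux m R η φ → ∀ x, φ x ≤ Real.exp R := by
    intro φ hφ x
    obtain ⟨hpos, hhol, hint, hI⟩ := id hφ
    have h0 : φ x = ∫ _, φ x ∂m := by simp
    rw [h0]
    calc (∫ _, φ x ∂m) ≤ ∫ y, Real.exp R * φ y ∂m :=
        integral_mono (integrable_const _) (hint.const_mul _)
          (fun y => coneRatio φ ⟨hpos, hhol, hint, hI⟩ x y)
      _ = Real.exp R := by rw [integral_const_mul, hI, mul_one]
  have coneLB : ∀ φ, ConeAux m R η φ → ∀ x, Real.exp (-R) ≤ φ x := by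
    intro φ hφ x
    obtain ⟨hpos, hhol, hint, hI⟩ := id hφ
    have h1 : (1:ℝ) ≤ Real.exp R * φ x := by
      rw [← hI]
      calc (∫ y, φ y ∂m) ≤ ∫ _, Real.exp R * φ x ∂m :=
          integral_mono hint (integrable_const _)
            (fun y => coneRatio φ ⟨hpos, hhol, hint, hI⟩ y x)
        _ = Real.exp R * φ x := by rw [integral_const]; simp
    nlinarith [mul_le_mul_of_nonneg_left h1 heRn.le]
  have coneAbs : ∀ φ, ConeAux m R η φ → ∀ x, |φ x| ≤ Real.exp R := by
    intro φ hφ x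
    obtain ⟨hpos, -, -, -⟩ := id hφ
    rw [abs_of_pos (hpos x)]; exact coneUB φ hφ x
  have coneLip : ∀ φ, ConeAux m R η φ → ∀ z w : Y,
      |φ z - φ w| ≤ Real.exp R * R * dist z w ^ η := by
    intro φ hφ z w
    have key : ∀ a b : Y, φ b ≤ φ a → φ a - φ b ≤ Real.exp R * R * dist a b ^ η := by
      intro a b hab
      obtain ⟨hpos, hhol, _, _⟩ := id hφ
      have hlog : Real.log (φ a) - Real.log (φ b) ≤ R * dist a b ^ η := (abs_le.mp (hhol a b)).2
      have h2 : Real.log (φ b / φ a) ≤ φ b / φ a - 1 :=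
        Real.log_le_sub_one_of_pos (div_pos (hpos b) (hpos a))
      rw [Real.log_div (ne_of_gt (hpos b)) (ne_of_gt (hpos a))] at h2
      have h2' := mul_le_mul_of_nonneg_left h2 (hpos a).le
      have h3 : φ a * (φ b / φ a - 1) = φ b - φ a := by
        rw [mul_sub, mul_div_cancel₀ _ (hpos a).ne', mul_one]
      rw [h3] at h2'
      have h4 : φ a - φ b ≤ φ a * (Real.log (φ a) - Real.log (φ b)) := by nlinarith
      calc φ a - φ b ≤ φ a * (R * dist a b ^ η) := by
            nlinarith [mul_le_mul_of_nonneg_left hlog (hpos a).le]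
        _ ≤ Real.exp R * (R * dist a b ^ η) :=
            mul_le_mul_of_nonneg_right (coneUB φ hφ a) (by positivity)
        _ = Real.exp R * R * dist a b ^ η := by ring
    rcases le_total (φ w) (φ z) with h | h
    · rw [abs_of_nonneg (by linarith)]; exact key z w h
    · rw [abs_of_nonpos (by linarith)]
      have h5 := key w z h
      rw [dist_comm w z] at h5
      linarith
  -- key logarithmic inequality via monotonicity
  have keylog : ∀ a b : ℝ, Real.exp (-R) ≤ b → b ≤ a →
      (Real.log (a - ξ) - Real.log (b - ξ)) * (1 - ξ * Real.exp R) ≤ Real.log a - Real.log b := by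
    intro a b hb hba
    have hder : ∀ u : ℝ, Real.exp (-R) < u →
        HasDerivAt (fun u => (1 - ξ * Real.exp R) * Real.log (u - ξ) - Real.log u)
          ((1 - ξ * Real.exp R) * (u - ξ)⁻¹ - u⁻¹) u := by
      intro u hu
      have hu0 : 0 < u := lt_trans heRn hu
      have huξ : 0 < u - ξ := by linarith
      have h1 : HasDerivAt (fun v : ℝ => v - ξ) 1 u := (hasDerivAt_id u).sub_const ξ
      have h2 := (Real.hasDerivAt_log (ne_of_gt huξ)).comp u h1
      simp only [mul_one] at h2
      exact (h2.const_mul _).sub (Real.hasDerivAt_log (ne_of_gt hu0))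
    have hanti : AntitoneOn (fun u => (1 - ξ * Real.exp R) * Real.log (u - ξ) - Real.log u)
        (Set.Ici (Real.exp (-R))) := by
      apply antitoneOn_of_deriv_nonpos (convex_Ici _)
      · intro u hu
        rcases eq_or_lt_of_le (Set.mem_Ici.mp hu) with h | h
        · -- continuity at the left endpoint: differentiable on a neighbourhood anyway
          have hu0 : 0 < u := by rw [← h]; exact heRn
          have huξ : 0 < u - ξ := by rw [← h]; linarith
          have h1 : HasDerivAt (fun v : ℝ => v - ξ) 1 u := (hasDerivAt_id u).sub_const ξ
          have h2 := (Real.hasDerivAt_log (ne_of_gt huξ)).comp u h1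
          exact (((h2.const_mul _).sub (Real.hasDerivAt_log (ne_of_gt hu0))).differentiableAt.continuousAt).continuousWithinAt
        · exact ((hder u h).differentiableAt.continuousAt).continuousWithinAt
      · intro u hu
        rw [interior_Ici] at hu
        exact (hder u hu).differentiableAt.differentiableWithinAt
      · intro u hu
        rw [interior_Ici] at hu
        have hu' : Real.exp (-R) < u := hu
        rw [(hder u hu').deriv]
        have hu0 : 0 < u := lt_trans heRn hu'
        have huξ : 0 < u - ξ := by linarith
        have h2 : 1 ≤ Real.exp R * u := by
          have := mul_le_mul_of_nonneg_left hu'.le heR.le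
          nlinarith
        have h4 : (1 - ξ * Real.exp R) / (u - ξ) ≤ 1 / u := by
          rw [div_le_div_iff₀ huξ hu0]
          nlinarith
        rw [sub_nonpos, ← div_eq_mul_inv, ← one_div]
        exact h4
    have hamem : a ∈ Set.Ici (Real.exp (-R)) := Set.mem_Ici.mpr (le_trans hb hba)
    have hbmem : b ∈ Set.Ici (Real.exp (-R)) := Set.mem_Ici.mpr hb
    have := hanti hbmem hamem hba
    simp only [] at this
    linarith
  -- pointwise ratio estimate for the terms of Pm
  have termRatio : ∀ φ : Y → ℝ, (∀ x, 0 < φ x) →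
      (∀ x y : Y, |Real.log (φ x) - Real.log (φ y)| ≤ R * dist x y ^ η) →
      ∀ y z i, ζ (inv i y) * φ (inv i y) ≤
        Real.exp ((K + Λ ^ (-η) * R) * dist y z ^ η) * (ζ (inv i z) * φ (inv i z)) := by
    intro φ hpos hhol y z i
    have hζd := hdist i (inv i y) (hinv_mem i y) (inv i z) (hinv_mem i z)
    rw [hinv_right, hinv_right] at hζd
    have h1 : Real.log (ζ (inv i y)) - Real.log (ζ (inv i z)) ≤ K * dist y z ^ η :=
      (abs_le.mp hζd).2
    have hΛd := hexp i (inv i y) (hinv_mem i y) (inv i z) (hinv_mem i z)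
    rw [hinv_right, hinv_right] at hΛd
    have h2 : dist (inv i y) (inv i z) ≤ Λ⁻¹ * dist y z := by
      have h2' := mul_le_mul_of_nonneg_left hΛd (inv_nonneg.mpr hΛ0.le)
      rwa [← mul_assoc, inv_mul_cancel₀ hΛ0.ne', one_mul] at h2'
    have h3 : dist (inv i y) (inv i z) ^ η ≤ Λ ^ (-η) * dist y z ^ η := by
      calc dist (inv i y) (inv i z) ^ η ≤ (Λ⁻¹ * dist y z) ^ η :=
            Real.rpow_le_rpow dist_nonneg h2 hη0.le
        _ = Λ⁻¹ ^ η * dist y z ^ η := Real.mul_rpow (by positivity) dist_nonneg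
        _ = Λ ^ (-η) * dist y z ^ η := by
            rw [Real.inv_rpow hΛ0.le, ← Real.rpow_neg hΛ0.le]
    have h4 : Real.log (φ (inv i y)) - Real.log (φ (inv i z)) ≤
        Λ ^ (-η) * R * dist y z ^ η := by
      calc Real.log (φ (inv i y)) - Real.log (φ (inv i z))
          ≤ R * dist (inv i y) (inv i z) ^ η := (abs_le.mp (hhol (inv i y) (inv i z))).2
        _ ≤ R * (Λ ^ (-η) * dist y z ^ η) := mul_le_mul_of_nonneg_left h3 hR.le
        _ = Λ ^ (-η) * R * dist y z ^ η := by ring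
    have hexpand : (K + Λ ^ (-η) * R) * dist y z ^ η =
        K * dist y z ^ η + Λ ^ (-η) * R * dist y z ^ η := by ring
    calc ζ (inv i y) * φ (inv i y)
        = Real.exp (Real.log (ζ (inv i y)) + Real.log (φ (inv i y))) := by
          rw [Real.exp_add, Real.exp_log (hζ _), Real.exp_log (hpos _)]
      _ ≤ Real.exp ((K + Λ ^ (-η) * R) * dist y z ^ η +
            (Real.log (ζ (inv i z)) + Real.log (φ (inv i z)))) := by
          apply Real.exp_le_exp.mpr
          rw [hexpand]
          linarith
      _ = Real.exp ((K + Λ ^ (-η) * R) * dist y z ^ η) * (ζ (inv i z) * φ (inv i z)) := by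
          rw [Real.exp_add, Real.exp_add, Real.exp_log (hζ _), Real.exp_log (hpos _)]
  -- Pm maps the cone into itself
  have PmLe : ∀ φ, ConeAux m R η φ → ∀ y z,
      Pm φ y ≤ Real.exp ((K + Λ ^ (-η) * R) * dist y z ^ η) * Pm φ z := by
    intro φ hφ y z
    obtain ⟨hpos, hhol, hint, hI⟩ := id hφ
    rw [hPm, hPm, ← tsum_mul_left]
    exact Summable.tsum_le_tsum (fun i => termRatio φ hpos hhol y z i)
      (hsumφ φ _ (coneAbs φ hφ) y) (((hsumφ φ _ (coneAbs φ hφ) z)).mul_left _)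
  have PmPos : ∀ φ, ConeAux m R η φ → ∀ y, 0 < Pm φ y := by
    intro φ hφ y
    obtain ⟨hpos, -, -, -⟩ := id hφ
    obtain ⟨i₀⟩ := hι
    rw [hPm]
    calc (0:ℝ) < ζ (inv i₀ y) * φ (inv i₀ y) := mul_pos (hζ _) (hpos _)
      _ ≤ ∑' i, ζ (inv i y) * φ (inv i y) :=
        Summable.le_tsum (hsumφ φ _ (coneAbs φ hφ) y) i₀
          (fun j _ => (mul_pos (hζ _) (hpos _)).le)
  have PmHol : ∀ φ, ConeAux m R η φ → ∀ y z,
      |Real.log (Pm φ y) - Real.log (Pm φ z)| ≤ (K + Λ ^ (-η) * R) * dist y z ^ η := by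
    intro φ hφ y z
    have half : ∀ y z : Y, Real.log (Pm φ y) - Real.log (Pm φ z) ≤
        (K + Λ ^ (-η) * R) * dist y z ^ η := by
      intro y z
      have h1 := PmLe φ hφ y z
      have h2 : Real.log (Pm φ y) ≤
          Real.log (Real.exp ((K + Λ ^ (-η) * R) * dist y z ^ η) * Pm φ z) :=
        Real.log_le_log (PmPos φ hφ y) h1
      rwa [Real.log_mul (Real.exp_ne_zero _) (ne_of_gt (PmPos φ hφ z)), Real.log_exp,
        ← sub_le_iff_le_add] at h2
    refine abs_sub_le_iff.mpr ⟨half y z, ?_⟩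
    have h3 := half z y
    rwa [dist_comm z y] at h3
  have PmCone : ∀ φ, ConeAux m R η φ → ConeAux m R η (Pm φ) := by
    intro φ hφ
    obtain ⟨hpos, hhol, hint, hI⟩ := id hφ
    have hIP : ∫ y, Pm φ y ∂m = 1 := by rw [hdual φ hint, hI]
    have hintP : Integrable (Pm φ) m := by
      by_contra hcon
      rw [integral_undef hcon] at hIP
      norm_num at hIP
    refine ⟨PmPos φ hφ, ?_, hintP, hIP⟩
    intro y z
    refine le_trans (PmHol φ hφ y z) ?_
    have : K + Λ ^ (-η) * R ≤ R := by nlinarith [mul_nonneg (mul_nonneg hξ0.le heR.le) hR.le]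
    exact mul_le_mul_of_nonneg_right this (hdη0 y z)
  have oneCone : ConeAux m R η (fun _ : Y => (1:ℝ)) := by
    refine ⟨fun _ => one_pos, ?_, integrable_const 1, by simp⟩
    intro x y
    simp only [Real.log_one, sub_zero, abs_zero]
    positivity
  -- the ψ step in the coupling decomposition
  have ψCone : ∀ φ, ConeAux m R η φ →
      ConeAux m R η (fun x => (Pm φ x - ξ) / (1 - ξ)) := by
    intro φ hφ
    have hPφ := PmCone φ hφ
    have hLB : ∀ x, Real.exp (-R) ≤ Pm φ x := coneLB _ hPφ
    have hposψ : ∀ x, 0 < (Pm φ x - ξ) / (1 - ξ) := by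
      intro x
      apply div_pos _ h1ξ
      have := hLB x; linarith
    have hnum : ∀ x, 0 < Pm φ x - ξ := by intro x; have := hLB x; linarith
    refine ⟨hposψ, ?_, ?_, ?_⟩
    · -- log-Hölder bound via keylog
      intro z w
      have hlogψ : ∀ x : Y, Real.log ((Pm φ x - ξ) / (1 - ξ)) =
          Real.log (Pm φ x - ξ) - Real.log (1 - ξ) :=
        fun x => Real.log_div (hnum x).ne' h1ξ.ne'
      rw [hlogψ, hlogψ]
      have main : ∀ z w : Y, Pm φ w ≤ Pm φ z →
          Real.log (Pm φ z - ξ) - Real.log (Pm φ w - ξ) ≤ R * dist z w ^ η := by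
        intro z w hle
        have h1 := keylog (Pm φ z) (Pm φ w) (hLB w) hle
        have h2 : Real.log (Pm φ z) - Real.log (Pm φ w) ≤
            (K + Λ ^ (-η) * R) * dist z w ^ η := (abs_le.mp (PmHol φ hφ z w)).2
        have h3 : (K + Λ ^ (-η) * R) * dist z w ^ η ≤
            R * (1 - ξ * Real.exp R) * dist z w ^ η :=
          mul_le_mul_of_nonneg_right hRξ (hdη0 z w)
        have h4 : (Real.log (Pm φ z - ξ) - Real.log (Pm φ w - ξ)) * (1 - ξ * Real.exp R) ≤
            R * dist z w ^ η * (1 - ξ * Real.exp R) := by nlinarith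
        exact le_of_mul_le_mul_right h4 hq0
      have hsimp : (Real.log (Pm φ z - ξ) - Real.log (1 - ξ)) -
          (Real.log (Pm φ w - ξ) - Real.log (1 - ξ)) =
          Real.log (Pm φ z - ξ) - Real.log (Pm φ w - ξ) := by ring
      rw [hsimp]
      rcases le_total (Pm φ w) (Pm φ z) with h | h
      · have hnn : 0 ≤ Real.log (Pm φ z - ξ) - Real.log (Pm φ w - ξ) := by
          have := Real.log_le_log (hnum w) (by linarith : Pm φ w - ξ ≤ Pm φ z - ξ)
          linarith
        rw [abs_of_nonneg hnn]
        exact main z w h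
      · have hnp : Real.log (Pm φ z - ξ) - Real.log (Pm φ w - ξ) ≤ 0 := by
          have := Real.log_le_log (hnum z) (by linarith : Pm φ z - ξ ≤ Pm φ w - ξ)
          linarith
        rw [abs_of_nonpos hnp]
        have hmain := main w z h
        rw [dist_comm w z] at hmain
        linarith
    · exact (hPφ.2.2.1.sub (integrable_const ξ)).div_const _
    · rw [integral_div]
      rw [integral_sub hPφ.2.2.1 (integrable_const ξ)]
      rw [hPφ.2.2.2]
      rw [integral_const]
      simp [div_self h1ξ.ne']
  have ψdecomp : ∀ φ : Y → ℝ, ∀ x : Y,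
      Pm φ x = ξ * (fun _ : Y => (1:ℝ)) x + (1 - ξ) * ((Pm φ x - ξ) / (1 - ξ)) := by
    intro φ x
    field_simp
    ring
  -- linearity of Pm on bounded cone functions
  have Pmadd : ∀ (a b : ℝ) (f g : Y → ℝ), ConeAux m R η f → ConeAux m R η g →
      Pm (fun x => a * f x + b * g x) = fun x => a * Pm f x + b * Pm g x := by
    intro a b f g hf hg
    funext y
    rw [hPm, hPm, hPm, ← tsum_mul_left, ← tsum_mul_left,
      ← Summable.tsum_add ((hsumφ f _ (coneAbs f hf) y).mul_left a)
        ((hsumφ g _ (coneAbs g hg) y).mul_left b)]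
    congr 1
    funext i
    ring
  have PmIterLin : ∀ (n : ℕ) (a b : ℝ) (f g : Y → ℝ), ConeAux m R η f → ConeAux m R η g →
      Pm^[n] (fun x => a * f x + b * g x) = fun x => a * Pm^[n] f x + b * Pm^[n] g x := by
    intro n
    induction n with
    | zero => intro a b f g _ _; simp
    | succ n ih =>
      intro a b f g hf hg
      rw [Function.iterate_succ_apply, Function.iterate_succ_apply,
        Function.iterate_succ_apply, Pmadd a b f g hf hg,
        ih a b (Pm f) (Pm g) (PmCone f hf) (PmCone g hg)]
  -- cone elements stay in the cone under iteration
  have coneIter : ∀ n : ℕ, ∀ f : Y → ℝ, ConeAux m R η f → ConeAux m R η (Pm^[n] f) := by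
    intro n
    induction n with
    | zero => intro f hf; simpa using hf
    | succ n ih =>
      intro f hf
      rw [Function.iterate_succ_apply']
      exact PmCone _ (ih f hf)
  -- the contraction estimate
  have contr : ∀ n : ℕ, ∀ f g : Y → ℝ, ConeAux m R η f → ConeAux m R η g →
      (∀ x, |Pm^[n] f x - Pm^[n] g x| ≤ 2 * Real.exp R * (1 - ξ) ^ n) ∧
      (∀ z w : Y, |(Pm^[n] f z - Pm^[n] g z) - (Pm^[n] f w - Pm^[n] g w)| ≤
        2 * (Real.exp R * R) * (1 - ξ) ^ n * dist z w ^ η) := by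
    intro n
    induction n with
    | zero =>
      intro f g hf hg
      constructor
      · intro x
        simp only [Function.iterate_zero, id_eq, pow_zero, mul_one]
        have h1 := coneUB f hf x
        have h2 := coneUB g hg x
        have h3 := hf.1 x
        have h4 := hg.1 x
        rw [abs_le]
        constructor <;> linarith
      · intro z w
        simp only [Function.iterate_zero, id_eq, pow_zero, mul_one]
        have h1 := coneLip f hf z w
        have h2 := coneLip g hg z w
        calc |(f z - g z) - (f w - g w)| = |(f z - f w) - (g z - g w)| := by ring_nf
          _ ≤ |f z - f w| + |g z - g w| := abs_sub _ _
          _ ≤ 2 * (Real.exp R * R) * dist z w ^ η := by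
              rw [two_mul]; ring_nf; ring_nf at h1 h2; linarith
    | succ n ih =>
      intro f g hf hg
      have hψf := ψCone f hf
      have hψg := ψCone g hg
      have hdecf : Pm^[n + 1] f =
          fun x => ξ * Pm^[n] (fun _ : Y => (1:ℝ)) x +
            (1 - ξ) * Pm^[n] (fun x => (Pm f x - ξ) / (1 - ξ)) x := by
        rw [Function.iterate_succ_apply]
        have h0 : Pm f = fun x => ξ * (fun _ : Y => (1:ℝ)) x +
            (1 - ξ) * ((Pm f x - ξ) / (1 - ξ)) := funext (ψdecomp f)
        conv_lhs => rw [h0]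
        rw [PmIterLin n ξ (1 - ξ) (fun _ => 1) (fun x => (Pm f x - ξ) / (1 - ξ))
          oneCone hψf]
      have hdecg : Pm^[n + 1] g =
          fun x => ξ * Pm^[n] (fun _ : Y => (1:ℝ)) x +
            (1 - ξ) * Pm^[n] (fun x => (Pm g x - ξ) / (1 - ξ)) x := by
        rw [Function.iterate_succ_apply]
        have h0 : Pm g = fun x => ξ * (fun _ : Y => (1:ℝ)) x +
            (1 - ξ) * ((Pm g x - ξ) / (1 - ξ)) := funext (ψdecomp g)
        conv_lhs => rw [h0]
        rw [PmIterLin n ξ (1 - ξ) (fun _ => 1) (fun x => (Pm g x - ξ) / (1 - ξ))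
          oneCone hψg]
      obtain ⟨ih1, ih2⟩ := ih (fun x => (Pm f x - ξ) / (1 - ξ))
        (fun x => (Pm g x - ξ) / (1 - ξ)) hψf hψg
      constructor
      · intro x
        rw [hdecf, hdecg]
        have h5 : (ξ * Pm^[n] (fun _ : Y => (1:ℝ)) x +
            (1 - ξ) * Pm^[n] (fun x => (Pm f x - ξ) / (1 - ξ)) x) -
            (ξ * Pm^[n] (fun _ : Y => (1:ℝ)) x +
            (1 - ξ) * Pm^[n] (fun x => (Pm g x - ξ) / (1 - ξ)) x) =
            (1 - ξ) * (Pm^[n] (fun x => (Pm f x - ξ) / (1 - ξ)) x -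
              Pm^[n] (fun x => (Pm g x - ξ) / (1 - ξ)) x) := by ring
        rw [h5, abs_mul, abs_of_pos h1ξ]
        calc (1 - ξ) * |Pm^[n] (fun x => (Pm f x - ξ) / (1 - ξ)) x -
              Pm^[n] (fun x => (Pm g x - ξ) / (1 - ξ)) x| ≤
            (1 - ξ) * (2 * Real.exp R * (1 - ξ) ^ n) :=
              mul_le_mul_of_nonneg_left (ih1 x) h1ξ.le
          _ = 2 * Real.exp R * (1 - ξ) ^ (n + 1) := by ring
      · intro z w
        rw [hdecf, hdecg]
        have h6 : (ξ * Pm^[n] (fun _ : Y => (1:ℝ)) z +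
            (1 - ξ) * Pm^[n] (fun x => (Pm f x - ξ) / (1 - ξ)) z -
            (ξ * Pm^[n] (fun _ : Y => (1:ℝ)) z +
            (1 - ξ) * Pm^[n] (fun x => (Pm g x - ξ) / (1 - ξ)) z)) -
            (ξ * Pm^[n] (fun _ : Y => (1:ℝ)) w +
            (1 - ξ) * Pm^[n] (fun x => (Pm f x - ξ) / (1 - ξ)) w -
            (ξ * Pm^[n] (fun _ : Y => (1:ℝ)) w +
            (1 - ξ) * Pm^[n] (fun x => (Pm g x - ξ) / (1 - ξ)) w)) =
            (1 - ξ) * ((Pm^[n] (fun x => (Pm f x - ξ) / (1 - ξ)) z -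
              Pm^[n] (fun x => (Pm g x - ξ) / (1 - ξ)) z) -
              (Pm^[n] (fun x => (Pm f x - ξ) / (1 - ξ)) w -
              Pm^[n] (fun x => (Pm g x - ξ) / (1 - ξ)) w)) := by ring
        rw [h6, abs_mul, abs_of_pos h1ξ]
        calc (1 - ξ) * |(Pm^[n] (fun x => (Pm f x - ξ) / (1 - ξ)) z -
              Pm^[n] (fun x => (Pm g x - ξ) / (1 - ξ)) z) -
              (Pm^[n] (fun x => (Pm f x - ξ) / (1 - ξ)) w -
              Pm^[n] (fun x => (Pm g x - ξ) / (1 - ξ)) w)| ≤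
            (1 - ξ) * (2 * (Real.exp R * R) * (1 - ξ) ^ n * dist z w ^ η) :=
              mul_le_mul_of_nonneg_left (ih2 z w) h1ξ.le
          _ = 2 * (Real.exp R * R) * (1 - ξ) ^ (n + 1) * dist z w ^ η := by ring
  -- construction of the limit ρ
  have hγ : |1 - ξ| < 1 := by rw [abs_of_pos h1ξ]; linarith
  have coneItOne : ∀ n : ℕ, ConeAux m R η (Pm^[n] fun _ : Y => (1:ℝ)) :=
    fun n => coneIter n _ oneCone
  have hcseq : ∀ x : Y, ∃ L : ℝ,
      Tendsto (fun n => Pm^[n] (fun _ : Y => (1:ℝ)) x) atTop (nhds L) := by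
    intro x
    apply cauchySeq_tendsto_of_complete
    apply cauchySeq_of_le_geometric (1 - ξ) (2 * Real.exp R) (by linarith)
    intro n
    rw [Real.dist_eq]
    have h1 : Pm^[n + 1] (fun _ : Y => (1:ℝ)) = Pm^[n] (Pm fun _ : Y => (1:ℝ)) :=
      Function.iterate_succ_apply Pm n _
    rw [h1]
    exact (contr n _ _ oneCone (PmCone _ oneCone)).1 x
  choose ρ hρ using hcseq
  -- tail estimates
  have hshift : ∀ n x, Tendsto (fun k => Pm^[n] (Pm^[k] (fun _ : Y => (1:ℝ))) x)
      atTop (nhds (ρ x)) := by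
    intro n x
    have hfun : (fun k => Pm^[n] (Pm^[k] (fun _ : Y => (1:ℝ))) x) =
        fun k => Pm^[k + n] (fun _ : Y => (1:ℝ)) x := by
      funext k; rw [add_comm, Function.iterate_add_apply]
    rw [hfun]
    exact (hρ x).comp (tendsto_add_atTop_nat n)
  have tail1 : ∀ n x, |Pm^[n] (fun _ : Y => (1:ℝ)) x - ρ x| ≤
      2 * Real.exp R * (1 - ξ) ^ n := by
    intro n x
    have hk := (Tendsto.const_sub (Pm^[n] (fun _ : Y => (1:ℝ)) x) (hshift n x)).abs
    refine le_of_tendsto hk (Eventually.of_forall fun k => ?_)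
    exact (contr n _ _ oneCone (coneItOne k)).1 x
  have tail2 : ∀ n (z w : Y),
      |(Pm^[n] (fun _ : Y => (1:ℝ)) z - ρ z) - (Pm^[n] (fun _ : Y => (1:ℝ)) w - ρ w)| ≤
      2 * (Real.exp R * R) * (1 - ξ) ^ n * dist z w ^ η := by
    intro n z w
    have hk := ((Tendsto.const_sub (Pm^[n] (fun _ : Y => (1:ℝ)) z) (hshift n z)).sub
      (Tendsto.const_sub (Pm^[n] (fun _ : Y => (1:ℝ)) w) (hshift n w))).abs
    refine le_of_tendsto hk (Eventually.of_forall fun k => ?_)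
    exact (contr n _ _ oneCone (coneItOne k)).2 z w
  -- bounds on ρ
  have ρUB : ∀ x, ρ x ≤ Real.exp R :=
    fun x => le_of_tendsto (hρ x) (Eventually.of_forall fun n => coneUB _ (coneItOne n) x)
  have ρLB : ∀ x, Real.exp (-R) ≤ ρ x :=
    fun x => ge_of_tendsto (hρ x) (Eventually.of_forall fun n => coneLB _ (coneItOne n) x)
  have ρpos : ∀ x, 0 < ρ x := fun x => lt_of_lt_of_le heRn (ρLB x)
  -- log-Hölder bound for ρ
  have ρhol : ∀ x y : Y, |Real.log (ρ x) - Real.log (ρ y)| ≤ R * dist x y ^ η := by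
    intro x y
    have hx : Tendsto (fun n => Real.log (Pm^[n] (fun _ : Y => (1:ℝ)) x)) atTop
        (nhds (Real.log (ρ x))) :=
      ((Real.continuousAt_log (ρpos x).ne').tendsto).comp (hρ x)
    have hy : Tendsto (fun n => Real.log (Pm^[n] (fun _ : Y => (1:ℝ)) y)) atTop
        (nhds (Real.log (ρ y))) :=
      ((Real.continuousAt_log (ρpos y).ne').tendsto).comp (hρ y)
    refine le_of_tendsto ((hx.sub hy).abs) (Eventually.of_forall fun n => ?_)
    exact (coneItOne n).2.1 x y
  -- integrability and integral of ρ
  have ρmeas : AEStronglyMeasurable ρ m :=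
    aestronglyMeasurable_of_tendsto_ae atTop
      (fun n => (coneItOne n).2.2.1.aestronglyMeasurable)
      (Eventually.of_forall fun x => hρ x)
  have ρint : Integrable ρ m := by
    refine Integrable.mono' (integrable_const (Real.exp R)) ρmeas ?_
    refine Eventually.of_forall fun x => ?_
    rw [Real.norm_eq_abs, abs_of_pos (ρpos x)]
    exact ρUB x
  have ρI : ∫ y, ρ y ∂m = 1 := by
    have hdc := tendsto_integral_of_dominated_convergence (fun _ => Real.exp R)
      (fun n => (coneItOne n).2.2.1.aestronglyMeasurable) (integrable_const _)
      (fun n => Eventually.of_forall fun x => by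
        rw [Real.norm_eq_abs]; exact coneAbs _ (coneItOne n) x)
      (Eventually.of_forall fun x => hρ x)
    have h2 : (fun n => ∫ y, Pm^[n] (fun _ : Y => (1:ℝ)) y ∂m) = fun _ => (1:ℝ) :=
      funext fun n => (coneItOne n).2.2.2
    rw [h2] at hdc
    exact tendsto_nhds_unique hdc tendsto_const_nhds
  -- ρ is a fixed point of Pm
  have ρabs : ∀ x, |ρ x| ≤ Real.exp R := by
    intro x; rw [abs_of_pos (ρpos x)]; exact ρUB x
  have ρfix : ∀ y, Pm ρ y = ρ y := by
    intro y
    have hsρ : Summable fun i => ζ (inv i y) * ρ (inv i y) := hsumφ ρ _ ρabs y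
    have hPm1UB : (∑' i, ζ (inv i y)) ≤ Real.exp R := by
      have h1 : Pm^[1] (fun _ : Y => (1:ℝ)) y = ∑' i, ζ (inv i y) := by
        rw [Function.iterate_one, hPm]; simp
      have := coneUB _ (coneItOne 1) y
      rw [h1] at this
      exact this
    have key : ∀ n : ℕ, |Pm ρ y - Pm^[n + 1] (fun _ : Y => (1:ℝ)) y| ≤
        Real.exp R * (2 * Real.exp R * (1 - ξ) ^ n) := by
      intro n
      have hn := coneItOne n
      have hsn : Summable fun i => ζ (inv i y) * (Pm^[n] (fun _ : Y => (1:ℝ))) (inv i y) :=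
        hsumφ _ _ (coneAbs _ hn) y
      rw [Function.iterate_succ_apply', hPm, hPm, ← Summable.tsum_sub hsρ hsn]
      have hbd : ∀ i, ‖ζ (inv i y) * ρ (inv i y) -
          ζ (inv i y) * (Pm^[n] (fun _ : Y => (1:ℝ))) (inv i y)‖ ≤
          ζ (inv i y) * (2 * Real.exp R * (1 - ξ) ^ n) := by
        intro i
        rw [Real.norm_eq_abs, ← mul_sub, abs_mul, abs_of_pos (hζ _)]
        apply mul_le_mul_of_nonneg_left _ (hζ _).le
        rw [abs_sub_comm]
        exact tail1 n (inv i y)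
      have hsumbd : Summable fun i => ζ (inv i y) * (2 * Real.exp R * (1 - ξ) ^ n) :=
        (hsumζ y).mul_right _
      calc |∑' i, (ζ (inv i y) * ρ (inv i y) -
            ζ (inv i y) * (Pm^[n] (fun _ : Y => (1:ℝ))) (inv i y))|
          ≤ ∑' i, ‖ζ (inv i y) * ρ (inv i y) -
            ζ (inv i y) * (Pm^[n] (fun _ : Y => (1:ℝ))) (inv i y)‖ := by
            rw [← Real.norm_eq_abs]
            exact norm_tsum_le_tsum_norm (by simpa using (hsρ.sub hsn).abs)
        _ ≤ ∑' i, ζ (inv i y) * (2 * Real.exp R * (1 - ξ) ^ n) :=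
            Summable.tsum_le_tsum hbd (by simpa using (hsρ.sub hsn).abs) hsumbd
        _ = (∑' i, ζ (inv i y)) * (2 * Real.exp R * (1 - ξ) ^ n) := tsum_mul_right
        _ ≤ Real.exp R * (2 * Real.exp R * (1 - ξ) ^ n) := by
            apply mul_le_mul_of_nonneg_right hPm1UB
            positivity
    have h0 : Tendsto (fun n : ℕ => Pm^[n + 1] (fun _ : Y => (1:ℝ)) y) atTop
        (nhds (Pm ρ y)) := by
      rw [tendsto_iff_dist_tendsto_zero]
      refine squeeze_zero (g := fun n : ℕ => Real.exp R * (2 * Real.exp R * (1 - ξ) ^ n))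
        (fun n => dist_nonneg) (fun n => ?_) ?_
      · rw [Real.dist_eq, abs_sub_comm]
        exact key n
      · have h6 := (tendsto_pow_atTop_nhds_zero_of_abs_lt_one hγ).const_mul
          (Real.exp R * (2 * Real.exp R))
        simp only [mul_zero] at h6
        convert h6 using 1
        funext k
        ring
    have h1 : Tendsto (fun n : ℕ => Pm^[n + 1] (fun _ : Y => (1:ℝ)) y) atTop
        (nhds (ρ y)) := by
      have := (hρ y).comp (tendsto_add_atTop_nat 1)
      exact this
    exact tendsto_nhds_unique h0 h1
  -- conclusion
  refine ⟨ρ, ρpos, ρint, ρI, ρfix, fun x => ⟨ρLB x, ρUB x⟩, ρhol, ?_⟩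
  intro ε hε
  have hten : Tendsto
      (fun n : ℕ => (2 * Real.exp R + 2 * (Real.exp R * R)) * (1 - ξ) ^ n) atTop (nhds 0) := by
    have := (tendsto_pow_atTop_nhds_zero_of_abs_lt_one hγ).const_mul
      (2 * Real.exp R + 2 * (Real.exp R * R))
    simpa using this
  obtain ⟨N, hN⟩ := eventually_atTop.mp (hten.eventually_lt_const hε)
  refine ⟨N, fun n hn x z w hzw => ?_⟩
  have hd : 0 < dist z w ^ η := Real.rpow_pos_of_pos (dist_pos.mpr hzw) _
  have h1 := tail1 n x
  have h2 := tail2 n z w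
  have h3 : |(Pm^[n] (fun _ : Y => (1:ℝ))) z - ρ z - ((Pm^[n] (fun _ : Y => (1:ℝ))) w - ρ w)|
      / dist z w ^ η ≤ 2 * (Real.exp R * R) * (1 - ξ) ^ n := by
    rw [div_le_iff₀ hd]
    exact h2
  have h4 := hN n hn
  have h5 : |(Pm^[n] (fun _ : Y => (1:ℝ))) x - ρ x| +
      |(Pm^[n] (fun _ : Y => (1:ℝ))) z - ρ z - ((Pm^[n] (fun _ : Y => (1:ℝ))) w - ρ w)|
        / dist z w ^ η ≤
      (2 * Real.exp R + 2 * (Real.exp R * R)) * (1 - ξ) ^ n := by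
    have : (2 * Real.exp R + 2 * (Real.exp R * R)) * (1 - ξ) ^ n =
        2 * Real.exp R * (1 - ξ) ^ n + 2 * (Real.exp R * R) * (1 - ξ) ^ n := by ring
    rw [this]
    exact add_le_add h1 h3
  exact le_of_lt (lt_of_le_of_lt h5 h4)
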